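/- Let R be a commutative ring, n ≥ 2 an integer, and f, g ∈ R[X] polynomials of degree < n. Then the high short product of f and g equals the reversal of the low short product of the reversals of f quo X and g quo X; precisely: (f·g) quo X^n = rev_{n−1}( ( rev_{n−1}(f quo X) · rev_{n−1}(g quo X) ) mod X^{n−1} ). -/

import Mathlib

open Polynomial

private lemma coeff_divX_iterate {R : Type*} [CommRing R] (p : R[X]) (t i : ℕ) :
    ((Polynomial.divX)^[t] p).coeff i = p.coeff (i + t) := by
  induction t generalizing p with
  | zero => simp
  | succ t ih =>
      rw [Function.iterate_succ_apply, ih, coeff_divX, Nat.add_assoc]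

private lemma div_mod_X_pow {R : Type*} [CommRing R] [Nontrivial R] (p : R[X]) (t : ℕ) :
    p /ₘ X ^ t = (Polynomial.divX)^[t] p ∧ p %ₘ X ^ t = p - X ^ t * (Polynomial.divX)^[t] p := by
  set q : R[X] := (Polynomial.divX)^[t] p with hq
  have hXq : ∀ i, (X ^ t * q).coeff i = if t ≤ i then q.coeff (i - t) else 0 := by
    intro i
    rw [(commute_X_pow q t).eq, coeff_mul_X_pow']
  have hdeg : (p - X ^ t * q).degree < (X ^ t : R[X]).degree := by
    rw [degree_X_pow]
    rw [degree_lt_iff_coeff_zero]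
    intro m hm
    have hm' : t ≤ m := by exact_mod_cast hm
    rw [coeff_sub, hXq, if_pos hm', coeff_divX_iterate]
    rw [Nat.sub_add_cancel hm', sub_self]
  exact div_modByMonic_unique q (p - X ^ t * q) (monic_X_pow t) ⟨by ring, hdeg⟩

private lemma coeff_div_X_pow {R : Type*} [CommRing R] [Nontrivial R] (p : R[X]) (t i : ℕ) :
    (p /ₘ X ^ t).coeff i = p.coeff (i + t) := by
  rw [(div_mod_X_pow p t).1, coeff_divX_iterate]

private lemma coeff_mod_X_pow {R : Type*} [CommRing R] [Nontrivial R] (p : R[X]) (t i : ℕ) :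
    (p %ₘ X ^ t).coeff i = if i < t then p.coeff i else 0 := by
  rw [(div_mod_X_pow p t).2, coeff_sub]
  rw [(commute_X_pow _ t).eq, coeff_mul_X_pow', coeff_divX_iterate]
  by_cases h : i < t
  · rw [if_neg (by omega), if_pos h, sub_zero]
  · rw [if_pos (by omega), if_neg h, Nat.sub_add_cancel (by omega), sub_self]

theorem high_short_product_eq_reversed_low_short_product
    {R : Type*} [CommRing R] (n : ℕ) (hn : 2 ≤ n)
    (f g : R[X]) (hf : f.degree < n) (hg : g.degree < n) :
    (f * g) /ₘ (X ^ n) =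
      reflect (n - 2)
        ((reflect (n - 2) (f /ₘ X) * reflect (n - 2) (g /ₘ X)) %ₘ (X ^ (n - 1))) := by
  nontriviality R
  obtain ⟨m, rfl⟩ : ∃ m, n = m + 2 := ⟨n - 2, by omega⟩
  simp only [show m + 2 - 2 = m from rfl, show m + 2 - 1 = m + 1 from rfl]
  set f1 : R[X] := f /ₘ X with hf1
  set g1 : R[X] := g /ₘ X with hg1
  have hfd : f.natDegree ≤ m + 1 := natDegree_le_iff_degree_le.2 (by
    exact_mod_cast Order.le_of_lt_succ (by exact_mod_cast hf))
  have hgd : g.natDegree ≤ m + 1 := natDegree_le_iff_degree_le.2 (by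
    exact_mod_cast Order.le_of_lt_succ (by exact_mod_cast hg))
  have hcf1 : ∀ i, f1.coeff i = f.coeff (i + 1) := fun i => by
    rw [hf1, ← pow_one (X : R[X]), coeff_div_X_pow]
  have hcg1 : ∀ i, g1.coeff i = g.coeff (i + 1) := fun i => by
    rw [hg1, ← pow_one (X : R[X]), coeff_div_X_pow]
  have hf1d : f1.natDegree ≤ m := natDegree_le_iff_coeff_eq_zero.2 fun N hN => by
    rw [hcf1]
    exact coeff_eq_zero_of_natDegree_lt (by omega)
  have hg1d : g1.natDegree ≤ m := natDegree_le_iff_coeff_eq_zero.2 fun N hN => by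
    rw [hcg1]
    exact coeff_eq_zero_of_natDegree_lt (by omega)
  have hrefl : reflect m f1 * reflect m g1 = reflect (m + m) (f1 * g1) :=
    (reflect_mul f1 g1 hf1d hg1d).symm
  -- key coefficient identity
  have key : ∀ k, (f * g).coeff (k + 2) = (f1 * g1).coeff k + (f.eval 0 * g.coeff (k + 2)
      + f1.coeff (k + 1) * g.eval 0) := by
    intro k
    have hfe : f = C (f.eval 0) + X * f1 := by
      conv_lhs => rw [← modByMonic_add_div f X, modByMonic_X]
    have hge : g = C (g.eval 0) + X * g1 := by
      conv_lhs => rw [← modByMonic_add_div g X, modByMonic_X]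
    have : f * g = C (f.eval 0) * C (g.eval 0) + (C (f.eval 0) * (X * g1)
        + (X * f1) * C (g.eval 0)) + X ^ 2 * (f1 * g1) := by
      conv_lhs => rw [hfe, hge]
      ring
    rw [this, coeff_add, coeff_add, coeff_add, coeff_X_pow_mul, ← C_mul, coeff_C,
      if_neg (by omega), coeff_C_mul, coeff_X_mul,
      mul_comm (X * f1), coeff_C_mul, coeff_X_mul, hcg1]
    ring
  ext i
  rw [coeff_div_X_pow, coeff_reflect, coeff_mod_X_pow]
  by_cases hi : i ≤ m
  · rw [revAt_le hi, if_pos (by omega), hrefl, coeff_reflect,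
      revAt_le (by omega : m - i ≤ m + m), show m + m - (m - i) = m + i by omega]
    have := key (i + m)
    rw [show i + m + 2 = i + (m + 2) from by ring] at this
    rw [this, show m + i = i + m from by ring]
    have h1 : g.coeff (i + (m + 2)) = 0 := coeff_eq_zero_of_natDegree_lt (by omega)
    have h2 : f1.coeff (i + m + 1) = 0 := coeff_eq_zero_of_natDegree_lt (by omega)
    rw [h1, h2]
    ring
  · rw [revAt_eq_self_of_lt (by omega), if_neg (by omega)]
    refine coeff_eq_zero_of_natDegree_lt ?_
    calc (f * g).natDegree ≤ f.natDegree + g.natDegree := natDegree_mul_le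
    _ < i + (m + 2) := by omega
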